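/- Let H = H₊ ⊕ H₋ be an orthogonal decomposition of a Hilbert space, A ∈ L(H₊) uniformly positive, K ∈ L(H₋,H₊) with ‖K‖ < 1, D ∈ L(H₋) self-adjoint with D + K*AK uniformly positive, and let S = [[A, -AK],[K*A, D]]. Then S is invertible and S⁻¹ = [[A⁻¹ - KZK*, KZ],[-ZK*, Z]], where Z = (D + K*AK)⁻¹. -/

import Mathlib

open ContinuousLinearMap

/-- The block operator `S = [[A, -AK],[K*A, D]]` acting on `Hp × Hm`. -/
noncomputable def blockOp {Hp Hm : Type*} [NormedAddCommGroup Hp] [InnerProductSpace ℂ Hp]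
    [NormedAddCommGroup Hm] [InnerProductSpace ℂ Hm] [CompleteSpace Hp] [CompleteSpace Hm]
    (A : Hp →L[ℂ] Hp) (K : Hm →L[ℂ] Hp) (D : Hm →L[ℂ] Hm) :
    (Hp × Hm) →L[ℂ] (Hp × Hm) :=
  ((A ∘L fst ℂ Hp Hm) - (A ∘L K ∘L snd ℂ Hp Hm)).prod
    (((adjoint K) ∘L A ∘L fst ℂ Hp Hm) + (D ∘L snd ℂ Hp Hm))

/-- The block operator `[[A⁻¹ - KZK*, KZ],[-ZK*, Z]]`, the claimed inverse. -/
noncomputable def blockInvOp {Hp Hm : Type*} [NormedAddCommGroup Hp] [InnerProductSpace ℂ Hp]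
    [NormedAddCommGroup Hm] [InnerProductSpace ℂ Hm] [CompleteSpace Hp] [CompleteSpace Hm]
    (Ainv : Hp →L[ℂ] Hp) (K : Hm →L[ℂ] Hp) (Z : Hm →L[ℂ] Hm) :
    (Hp × Hm) →L[ℂ] (Hp × Hm) :=
  (((Ainv - K ∘L Z ∘L adjoint K) ∘L fst ℂ Hp Hm) + ((K ∘L Z) ∘L snd ℂ Hp Hm)).prod
    ((-(Z ∘L adjoint K) ∘L fst ℂ Hp Hm) + (Z ∘L snd ℂ Hp Hm))

theorem stmt1 {Hp Hm : Type*} [NormedAddCommGroup Hp] [InnerProductSpace ℂ Hp]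
    [NormedAddCommGroup Hm] [InnerProductSpace ℂ Hm] [CompleteSpace Hp] [CompleteSpace Hm]
    (A Ainv : Hp →L[ℂ] Hp) (K : Hm →L[ℂ] Hp) (D Z : Hm →L[ℂ] Hm)
    (hA : IsSelfAdjoint A)
    (hApos : ∃ α > (0:ℝ), ∀ x : Hp, α * ‖x‖ ^ 2 ≤ (inner ℂ (A x) x : ℂ).re)
    (hAinv : A ∘L Ainv = 1 ∧ Ainv ∘L A = 1)
    (hK : ‖K‖ < 1)
    (hD : IsSelfAdjoint D)
    (hDK : ∃ c > (0:ℝ), ∀ y : Hm,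
      c * ‖y‖ ^ 2 ≤ (inner ℂ ((D + (adjoint K) ∘L A ∘L K) y) y : ℂ).re)
    (hZ : (D + (adjoint K) ∘L A ∘L K) ∘L Z = 1 ∧ Z ∘L (D + (adjoint K) ∘L A ∘L K) = 1) :
    blockOp A K D ∘L blockInvOp Ainv K Z = 1 ∧ blockInvOp Ainv K Z ∘L blockOp A K D = 1 := by
  have h1 : ∀ x, A (Ainv x) = x := fun x => by
    have := ContinuousLinearMap.ext_iff.mp hAinv.1 x; simpa using this
  have h2 : ∀ x, Ainv (A x) = x := fun x => by
    have := ContinuousLinearMap.ext_iff.mp hAinv.2 x; simpa using this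
  have h3 : ∀ y, D (Z y) + adjoint K (A (K (Z y))) = y := fun y => by
    have := ContinuousLinearMap.ext_iff.mp hZ.1 y; simpa using this
  have h4 : ∀ y, Z (D y + adjoint K (A (K y))) = y := fun y => by
    have := ContinuousLinearMap.ext_iff.mp hZ.2 y; simpa using this
  constructor
  · refine ContinuousLinearMap.ext fun ⟨x, y⟩ => ?_
    simp only [blockOp, blockInvOp, comp_apply, one_apply, prod_apply, coe_fst', coe_snd',
      sub_apply, add_apply, neg_apply, map_add, map_sub, map_neg, Prod.ext_iff,
      Prod.mk.injEq, Prod.fst_one, Prod.snd_one]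
    constructor
    · rw [h1]; abel
    · calc _ = adjoint K (A (Ainv x))
            - (D (Z (adjoint K x)) + adjoint K (A (K (Z (adjoint K x)))))
            + (D (Z y) + adjoint K (A (K (Z y)))) := by
            (try simp only [map_add, map_sub, map_neg]); abel
        _ = y := by rw [h1, h3, h3]; abel
  · refine ContinuousLinearMap.ext fun ⟨x, y⟩ => ?_
    simp only [blockOp, blockInvOp, comp_apply, one_apply, prod_apply, coe_fst', coe_snd',
      sub_apply, add_apply, neg_apply, map_add, map_sub, map_neg, Prod.ext_iff,
      Prod.mk.injEq, Prod.fst_one, Prod.snd_one]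
    constructor
    · calc _ = Ainv (A x) - Ainv (A (K y)) + K (Z (D y + adjoint K (A (K y)))) := by
            (try simp only [map_add, map_sub, map_neg]); abel
        _ = x := by rw [h2, h2, h4]; abel
    · calc _ = Z (D y + adjoint K (A (K y))) := by
            (try simp only [map_add, map_sub, map_neg]); abel
        _ = y := h4 y
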